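/- Let k be a field, A and B Noetherian k-algebras with R = A ⊗_k B Noetherian. Let {I_i}_{i≥0} be a descending filtration of ideals of A and {J_j}_{j≥0} a descending filtration of ideals of B (so I_{i+1} ⊆ I_i, J_{j+1} ⊆ J_j). Then for all s ≥ 1, in R: J_1 ∩ (Σ_{i=0}^{s-2} I_i J_{s-i} + I_{s-1}) = Σ_{i=0}^{s-1} I_i J_{s-i}. -/

import Mathlib

open TensorProduct Ideal

/-- Extension of an ideal of `A` to `A ⊗[k] B`. -/
noncomputable def extL (k : Type*) {A : Type*} (B : Type*) [Field k] [CommRing A] [CommRing B]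
    [Algebra k A] [Algebra k B] (I : Ideal A) : Ideal (A ⊗[k] B) :=
  I.map (Algebra.TensorProduct.includeLeft : A →ₐ[k] A ⊗[k] B)

/-- Extension of an ideal of `B` to `A ⊗[k] B`. -/
noncomputable def extR (k A : Type*) {B : Type*} [Field k] [CommRing A] [CommRing B]
    [Algebra k A] [Algebra k B] (J : Ideal B) : Ideal (A ⊗[k] B) :=
  J.map (Algebra.TensorProduct.includeRight : B →ₐ[k] A ⊗[k] B)

/-- Over a field, the extensions of `I` and `J` to the tensor product satisfy
`IR ∩ JR = IR·JR`. -/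
theorem inf_ext_eq_mul {k A B : Type*} [Field k] [CommRing A] [CommRing B]
    [Algebra k A] [Algebra k B] (I : Ideal A) (J : Ideal B) :
    extL k B I ⊓ extR k A J = extL k B I * extR k A J := by
  unfold extL extR
  set I' := I.restrictScalars k
  set J' := J.restrictScalars k
  apply le_antisymm
  · intro x hx
    obtain ⟨hx1, hx2⟩ := hx
    -- x is in the image of `A ⊗ J`
    have hx2' : x ∈ LinearMap.range (LinearMap.lTensor A J'.subtype) := by
      rw [← Ideal.map_includeRight_eq (R := k) (A := A) J]
      exact hx2
    obtain ⟨y, rfl⟩ := hx2'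
    -- its image under `mkQ I' ⊗ id B` vanishes since `x ∈ IR = range (I ⊗ B)`
    have h0 : LinearMap.rTensor B I'.mkQ (LinearMap.lTensor A J'.subtype y) = 0 := by
      have : LinearMap.lTensor A J'.subtype y ∈
          LinearMap.ker (LinearMap.rTensor B I'.mkQ) := by
        rw [rTensor_mkQ B I', ← Ideal.map_includeLeft_eq (R := k) (B := B) I]
        exact hx1
      exact this
    have hcomm : LinearMap.rTensor B I'.mkQ (LinearMap.lTensor A J'.subtype y)
        = LinearMap.lTensor (A ⧸ I') J'.subtype (LinearMap.rTensor J' I'.mkQ y) := by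
      rw [← LinearMap.comp_apply, LinearMap.rTensor_comp_lTensor,
        ← LinearMap.lTensor_comp_rTensor, LinearMap.comp_apply]
    have hinj : Function.Injective (LinearMap.lTensor (A ⧸ I') J'.subtype) :=
      Module.Flat.lTensor_preserves_injective_linearMap _ J'.injective_subtype
    have hy0 : LinearMap.rTensor J' I'.mkQ y = 0 := by
      apply hinj
      rw [map_zero, ← hcomm, h0]
    have hy : y ∈ LinearMap.range (LinearMap.rTensor J' I'.subtype) := by
      rw [← rTensor_mkQ J' I', LinearMap.mem_ker]
      exact hy0
    obtain ⟨z, rfl⟩ := hy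
    have : LinearMap.lTensor A J'.subtype (LinearMap.rTensor J' I'.subtype z)
        = TensorProduct.map I'.subtype J'.subtype z := by
      rw [← LinearMap.comp_apply, LinearMap.lTensor_comp_rTensor]
    rw [this]
    clear * -
    induction z with
    | zero => simp
    | tmul i j =>
      simp only [TensorProduct.map_tmul]
      have : (I'.subtype i) ⊗ₜ[k] (J'.subtype j)
          = ((i : A) ⊗ₜ[k] (1 : B)) * ((1 : A) ⊗ₜ[k] (j : B)) := by
        simp [Algebra.TensorProduct.tmul_mul_tmul]
      rw [this]
      exact Ideal.mul_mem_mul (Ideal.mem_map_of_mem _ i.2) (Ideal.mem_map_of_mem _ j.2)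
    | add u v hu hv => rw [map_add]; exact add_mem hu hv
  · exact le_inf Ideal.mul_le_left Ideal.mul_le_right

/-- For descending filtrations `{Iᵢ}` of ideals of `A` and `{Jⱼ}` of ideals of `B`, in
`R = A ⊗[k] B` one has
`J₁ ∩ (Σ_{i=0}^{s-2} Iᵢ J_{s-i} + I_{s-1}) = Σ_{i=0}^{s-1} Iᵢ J_{s-i}`. -/
theorem inf_binom_sum_one {k A B : Type*} [Field k] [CommRing A] [CommRing B]
    [Algebra k A] [Algebra k B] [IsNoetherianRing A] [IsNoetherianRing B]
    [IsNoetherianRing (A ⊗[k] B)]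
    (I : ℕ → Ideal A) (J : ℕ → Ideal B)
    (hI : ∀ i, I (i + 1) ≤ I i) (hJ : ∀ j, J (j + 1) ≤ J j)
    (s : ℕ) (hs : 1 ≤ s) :
    extR k A (J 1) ⊓
        ((∑ i ∈ Finset.range (s - 1), extL k B (I i) * extR k A (J (s - i))) +
          extL k B (I (s - 1))) =
      ∑ i ∈ Finset.range s, extL k B (I i) * extR k A (J (s - i)) := by
  have hJanti : Antitone J := antitone_nat_of_succ_le hJ
  set S := ∑ i ∈ Finset.range (s - 1), extL k B (I i) * extR k A (J (s - i)) with hS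
  -- split the right-hand side into the partial sum plus the last term
  have hsplit : ∑ i ∈ Finset.range s, extL k B (I i) * extR k A (J (s - i))
      = S + extL k B (I (s - 1)) * extR k A (J 1) := by
    have h1 : s = (s - 1) + 1 := (Nat.succ_pred_eq_of_pos hs).symm
    calc ∑ i ∈ Finset.range s, extL k B (I i) * extR k A (J (s - i))
        = ∑ i ∈ Finset.range ((s-1)+1), extL k B (I i) * extR k A (J (s - i)) := by rw [← h1]
      _ = S + extL k B (I (s-1)) * extR k A (J (s - (s-1))) := Finset.sum_range_succ _ _
      _ = _ := by rw [Nat.sub_sub_self hs]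
  -- each summand lies in the extension of `J 1`
  have hterm : ∀ i, i < s → extL k B (I i) * extR k A (J (s - i)) ≤ extR k A (J 1) := by
    intro i hi
    refine le_trans Ideal.mul_le_right (Ideal.map_mono (hJanti ?_))
    omega
  have hSle : S ≤ extR k A (J 1) := by
    rw [hS]
    refine Finset.sum_induction _ (fun T => T ≤ extR k A (J 1))
      (fun a b ha hb => ?_) (by simp) (fun i hi => hterm i (by
        have := Finset.mem_range.mp hi; omega))
    rw [Submodule.add_eq_sup]; exact sup_le ha hb
  rw [hsplit]
  apply le_antisymm
  · rintro x ⟨hx1, hx2⟩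
    have hx2' : x ∈ S ⊔ extL k B (I (s - 1)) := by
      rw [← Submodule.add_eq_sup]; exact hx2
    obtain ⟨y, hy, z, hz, rfl⟩ := Submodule.mem_sup.mp hx2'
    have hzJ : z ∈ extR k A (J 1) := by
      have : z = (y + z) - y := by ring
      rw [this]
      exact sub_mem (by exact hx1) (hSle hy)
    have hzmem : z ∈ extL k B (I (s-1)) * extR k A (J 1) := by
      rw [← inf_ext_eq_mul]
      exact ⟨hz, hzJ⟩
    rw [Submodule.add_eq_sup, Submodule.mem_sup]
    exact ⟨y, hy, z, hzmem, rfl⟩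
  · refine le_inf ?_ ?_
    · rw [Submodule.add_eq_sup]
      refine sup_le hSle (le_trans Ideal.mul_le_right le_rfl)
    · rw [Submodule.add_eq_sup, Submodule.add_eq_sup]
      exact sup_le le_sup_left (le_trans Ideal.mul_le_left le_sup_right)
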